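/- For Lebesgue-almost every x ∈ [0,1], lim_{n→∞} (log d_n(x))/n = 1; equivalently, the set A(1) has full Lebesgue measure in [0,1]. -/

import Mathlib

open Filter Set Topology MeasureTheory
open scoped ENNReal NNReal

/-- The Pierce expansion map `T`. -/
noncomputable def pierceT (x : ℝ) : ℝ := if x = 0 then 0 else 1 - (⌊1 / x⌋₊ : ℝ) * x

/-- The first Pierce digit `d₁(x)`, with `d₁(0) = ∞`. -/
noncomputable def pierceD1 (x : ℝ) : ℕ∞ := if x = 0 then ⊤ else ((⌊1 / x⌋₊ : ℕ) : ℕ∞)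

/-- The `k`-th Pierce expansion digit `d_k(x)` (for `k ≥ 1`). -/
noncomputable def pierceDigit (k : ℕ) (x : ℝ) : ℕ∞ := pierceD1 (pierceT^[k - 1] x)

/-- Extended logarithm on `ℕ∞`, with the convention `log ∞ = ∞`. -/
noncomputable def enlog (m : ℕ∞) : ℝ≥0∞ :=
  if m = ⊤ then ⊤ else ENNReal.ofReal (Real.log ((WithTop.untopD 0 m : ℕ) : ℝ))

/-- `A(α) = {x ∈ [0,1] : lim (log d_n(x))/n = α}`. -/
noncomputable def pierceA (α : ℝ≥0∞) : Set ℝ :=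
  {x ∈ Icc (0 : ℝ) 1 |
    Tendsto (fun n : ℕ => enlog (pierceDigit n x) / (n : ℝ≥0∞)) atTop (𝓝 α)}

/-- The number of leap years up to year `N` with intercalation sequence `σ`:
`L(σ, N) = Σ_{k ≥ 1} (-1)^{k+1} ⌊N/(σ₁⋯σ_k)⌋`, with `⌊N/∞⌋ = 0`. -/
noncomputable def leapL (σ : ℕ → ℕ∞) (N : ℕ) : ℝ :=
  ∑' k : ℕ, (-1 : ℝ) ^ k *
    ((N / WithTop.untopD 0 (∏ i ∈ Finset.Icc 1 (k + 1), σ i) : ℕ) : ℝ)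

/-- The quotient `(Nx - L((d_k(x))_k, N))/√(log N)`. -/
noncomputable def leapQ (x : ℝ) (N : ℕ) : ℝ :=
  ((N : ℝ) * x - leapL (fun k => pierceDigit k x) N) / Real.sqrt (Real.log N)

/-- `S(α)`: the set of `x ∈ [0,1]` whose leap-year quotient has limsup `1/√(2α)`
and liminf `-1/√(2α)`. -/
noncomputable def pierceS (α : ℝ≥0∞) : Set ℝ :=
  {x ∈ Icc (0 : ℝ) 1 |
    Filter.limsup (fun N : ℕ => ((leapQ x N : ℝ) : EReal)) atTop
      = (((2 * α) ^ (-(1 / 2) : ℝ) : ℝ≥0∞) : EReal) ∧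
    Filter.liminf (fun N : ℕ => ((leapQ x N : ℝ) : EReal)) atTop
      = -(((2 * α) ^ (-(1 / 2) : ℝ) : ℝ≥0∞) : EReal)}

/-- The fundamental interval `I_σ` associated with the finite sequence `σ 1, …, σ n`. -/
def fundI (n : ℕ) (σ : ℕ → ℕ) : Set ℝ :=
  {x ∈ Icc (0 : ℝ) 1 | ∀ k, 1 ≤ k → k ≤ n → pierceDigit k x = ((σ k : ℕ) : ℕ∞)}

namespace Pf18

lemma pierceT_zero : pierceT 0 = 0 := if_pos rfl

lemma iterate_pierceT_zero (k : ℕ) : pierceT^[k] 0 = 0 := Function.iterate_fixed pierceT_zero k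

lemma pierceD1_ne_zero {y : ℝ} (hy : y ≠ 0) : pierceD1 y = ((⌊1/y⌋₊ : ℕ) : ℕ∞) := if_neg hy

lemma pierceD1_le_coe_iff {y : ℝ} {M : ℕ} : pierceD1 y ≤ (M : ℕ∞) ↔ (y ≠ 0 ∧ ⌊1/y⌋₊ ≤ M) := by
  rcases eq_or_ne y 0 with rfl | hy
  · simp [pierceD1]
  · simp [pierceD1_ne_zero hy, hy, Nat.cast_le]

lemma coe_le_pierceD1_iff {y : ℝ} {M : ℕ} : (M : ℕ∞) ≤ pierceD1 y ↔ (y = 0 ∨ M ≤ ⌊1/y⌋₊) := by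
  rcases eq_or_ne y 0 with rfl | hy
  · simp [pierceD1]
  · simp [pierceD1_ne_zero hy, hy, Nat.cast_le]

/-- branch interval -/
def br (a : ℕ) : Set ℝ := Set.Ioc (1/((a:ℝ)+1)) (1/(a:ℝ))

lemma le_one_div_comm {x y : ℝ} (hx : 0 < x) (hy : 0 < y) : x ≤ 1/y ↔ y ≤ 1/x := by
  rw [le_div_iff₀ hy, le_div_iff₀ hx, mul_comm]

lemma one_div_lt_comm {x y : ℝ} (hx : 0 < x) (hy : 0 < y) : 1/y < x ↔ 1/x < y := by
  rw [div_lt_iff₀ hy, div_lt_iff₀ hx, mul_comm]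

lemma br_pos {a : ℕ} {x : ℝ} (hx : x ∈ br a) : 0 < x :=
  lt_of_le_of_lt (by positivity) hx.1

lemma br_floor {a : ℕ} (ha : 1 ≤ a) {x : ℝ} (hx : x ∈ br a) : ⌊1/x⌋₊ = a := by
  have hx0 : 0 < x := br_pos hx
  have ha0 : (0:ℝ) < a := by exact_mod_cast ha
  have h1 : (a:ℝ) ≤ 1/x := by
    rw [le_one_div_comm ha0 hx0]; exact hx.2
  have h2 : 1/x < (a:ℝ)+1 := by
    rw [one_div_lt_comm (by positivity : (0:ℝ) < (a:ℝ)+1) hx0]; exact hx.1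
  rw [Nat.floor_eq_iff (by positivity)]
  exact ⟨by exact_mod_cast h1, by exact_mod_cast h2⟩

lemma mem_br_self {x : ℝ} (hx0 : 0 < x) (hx1 : x ≤ 1) : x ∈ br ⌊1/x⌋₊ := by
  have h1 : (1:ℝ) ≤ 1/x := by rw [le_div_iff₀ hx0, one_mul]; exact hx1
  have hfl : (⌊1/x⌋₊ : ℝ) ≤ 1/x := Nat.floor_le (by positivity)
  have hfl0 : (0:ℝ) < ⌊1/x⌋₊ := by
    have : 1 ≤ ⌊1/x⌋₊ := (Nat.one_le_floor_iff _).2 h1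
    exact_mod_cast this
  constructor
  · rw [one_div_lt_comm hx0 (by positivity)]
    exact Nat.lt_floor_add_one (1/x)
  · rw [le_one_div_comm hx0 hfl0]
    exact hfl

lemma br_floor_ge {b : ℕ} (hb : 1 ≤ b) {x : ℝ} (hx : x ∈ Set.Ioc (0:ℝ) (1/(b:ℝ))) :
    b ≤ ⌊1/x⌋₊ := by
  have hb0 : (0:ℝ) < b := by exact_mod_cast hb
  apply Nat.le_floor
  rw [le_one_div_comm hb0 hx.1]
  exact hx.2

/-- cover of `Ioc 0 (1/b)` by branches -/
lemma Ioc_subset_iUnion_br {b : ℕ} (hb : 1 ≤ b) :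
    Set.Ioc (0:ℝ) (1/(b:ℝ)) ⊆ ⋃ i : ℕ, br (b + i) := by
  intro x hx
  have hb0 : (0:ℝ) < b := by exact_mod_cast hb
  have hx1 : x ≤ 1 := hx.2.trans (by rw [div_le_one hb0]; exact_mod_cast hb)
  have hge := br_floor_ge hb hx
  refine Set.mem_iUnion.2 ⟨⌊1/x⌋₊ - b, ?_⟩
  have : b + (⌊1/x⌋₊ - b) = ⌊1/x⌋₊ := by omega
  rw [this]
  exact mem_br_self hx.1 hx1

lemma br_pierceT {a : ℕ} (ha : 1 ≤ a) {x : ℝ} (hx : x ∈ br a) :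
    pierceT x = 1 - (a:ℝ) * x := by
  rw [pierceT, if_neg (br_pos hx).ne', br_floor ha hx]

lemma br_pierceT_mem {a : ℕ} (ha : 1 ≤ a) {x : ℝ} (hx : x ∈ br a) :
    pierceT x ∈ Set.Ico (0:ℝ) (1/((a:ℝ)+1)) := by
  have hx0 : 0 < x := br_pos hx
  have ha0 : (0:ℝ) < a := by exact_mod_cast ha
  rw [br_pierceT ha hx]
  constructor
  · have hax : x * (a:ℝ) ≤ 1 := by rw [← le_div_iff₀ ha0]; exact hx.2
    have := mul_comm (a:ℝ) x
    linarith
  · have h1 : 1/((a:ℝ)+1) < x := hx.1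
    have : (a:ℝ)*x > a/(a+1) := by
      calc (a:ℝ)/(a+1) = a * (1/(a+1)) := by ring
      _ < a * x := by exact mul_lt_mul_of_pos_left h1 ha0
    have he : 1 - (a:ℝ)/(a+1) = 1/(a+1) := by field_simp; ring
    linarith
/-- affine preimage volume -/
lemma vol_affine (a : ℝ) (ha : a ≠ 0) (E : Set ℝ) :
    volume ((fun x => 1 - a*x) ⁻¹' E) = ENNReal.ofReal |a⁻¹| * volume E := by
  have hc : (fun x : ℝ => 1 - a*x) = (fun t : ℝ => t + 1) ∘ (fun x : ℝ => (-a) * x) := by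
    funext x; simp; ring
  rw [hc, Set.preimage_comp]
  rw [Real.volume_preimage_mul_left (neg_ne_zero.2 ha)]
  rw [measure_preimage_add_right volume 1 E]
  congr 1
  rw [abs_inv, abs_neg, abs_inv]

lemma vol_branch {a : ℕ} (ha : 1 ≤ a) (S : Set ℝ) :
    volume (br a ∩ pierceT ⁻¹' S) ≤
      ENNReal.ofReal ((a:ℝ)⁻¹) * volume (S ∩ Set.Ico (0:ℝ) (1/((a:ℝ)+1))) := by
  have ha0 : (0:ℝ) < a := by exact_mod_cast ha
  have hsub : br a ∩ pierceT ⁻¹' S ⊆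
      (fun x => 1 - (a:ℝ)*x) ⁻¹' (S ∩ Set.Ico (0:ℝ) (1/((a:ℝ)+1))) := by
    intro x hx
    have hT := br_pierceT ha hx.1
    have hTm := br_pierceT_mem ha hx.1
    have hS : pierceT x ∈ S := hx.2
    rw [hT] at hTm hS
    exact ⟨hS, hTm⟩
  calc volume (br a ∩ pierceT ⁻¹' S) ≤ _ := measure_mono hsub
  _ = _ := vol_affine (a:ℝ) ha0.ne' _
  _ = _ := by rw [abs_of_pos (by positivity : (0:ℝ) < (a:ℝ)⁻¹)]

lemma vol_br (a : ℕ) (ha : 1 ≤ a) : volume (br a) ≤ ENNReal.ofReal (1/((a:ℝ)*((a:ℝ)+1))) := by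
  have ha0 : (0:ℝ) < a := by exact_mod_cast ha
  rw [br, Real.volume_Ioc]
  apply ENNReal.ofReal_le_ofReal
  have h : 1/(a:ℝ) - 1/((a:ℝ)+1) = 1/((a:ℝ)*((a:ℝ)+1)) := by
    field_simp
    ring
  rw [h]

/-- Bernoulli-based telescoping term bound. -/
lemma rpow_tele {q : ℝ} (hq : 0 < q) {u : ℝ} (hu : 1 ≤ u) :
    q * (u+1) ^ (-(q+1)) ≤ u ^ (-q) - (u+1)^(-q) := by
  have hu0 : (0:ℝ) < u := lt_of_lt_of_le one_pos hu
  have hv0 : (0:ℝ) < u + 1 := by linarith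
  have hA : (0:ℝ) < u ^ q := Real.rpow_pos_of_pos hu0 q
  have hB : (0:ℝ) < (u+1) ^ q := Real.rpow_pos_of_pos hv0 q
  have hC : (0:ℝ) < (u+1) ^ (q+1) := Real.rpow_pos_of_pos hv0 (q+1)
  have hbern : 1 + (q+1) * (1/u) ≤ (1 + 1/u) ^ (q+1) := by
    apply one_add_mul_self_le_rpow_one_add _ (by linarith)
    have : (0:ℝ) ≤ 1/u := by positivity
    linarith
  have hmul : (1 + 1/u) ^ (q+1) * u ^ (q+1) = (u+1) ^ (q+1) := by
    rw [← Real.mul_rpow (by positivity) (by positivity)]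
    congr 1
    field_simp
  have huq1 : u ^ (q+1) = u ^ q * u := by
    rw [Real.rpow_add hu0, Real.rpow_one]
  have h1 : (q + (u+1)) * u ^ q ≤ (u+1) ^ (q+1) := by
    calc (q + (u+1)) * u ^ q = (1 + (q+1) * (1/u)) * (u ^ q * u) := by
          field_simp; ring
    _ = (1 + (q+1) * (1/u)) * u ^ (q+1) := by rw [huq1]
    _ ≤ (1 + 1/u) ^ (q+1) * u ^ (q+1) := by
          apply mul_le_mul_of_nonneg_right hbern (by positivity)
    _ = (u+1) ^ (q+1) := hmul
  have hCn : (u+1) ^ (-(q+1)) = ((u+1) ^ (q+1))⁻¹ := Real.rpow_neg hv0.le _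
  have hAn : u ^ (-q) = (u ^ q)⁻¹ := Real.rpow_neg hu0.le _
  have hBn : (u+1) ^ (-q) = ((u+1) ^ q)⁻¹ := Real.rpow_neg hv0.le _
  rw [hCn, hAn, hBn]
  have hCB : (u+1) ^ (q+1) = (u+1) ^ q * (u+1) := by
    rw [Real.rpow_add hv0, Real.rpow_one]
  have hdivA : q + (u+1) ≤ ((u+1)^(q+1)) / (u^q) := (le_div_iff₀ hA).2 h1
  have h2 : q ≤ ((u^q)⁻¹ - ((u+1)^q)⁻¹) * ((u+1)^(q+1)) := by
    have e : ((u^q)⁻¹ - ((u+1)^q)⁻¹) * ((u+1)^(q+1))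
        = ((u+1)^(q+1))/(u^q) - ((u+1)^(q+1))/((u+1)^q) := by ring
    have e2 : ((u+1)^(q+1))/((u+1)^q) = u + 1 := by
      rw [hCB]; field_simp
    rw [e, e2]; linarith
  calc q * ((u+1)^(q+1))⁻¹
      ≤ (((u^q)⁻¹ - ((u+1)^q)⁻¹) * ((u+1)^(q+1))) * ((u+1)^(q+1))⁻¹ :=
        mul_le_mul_of_nonneg_right h2 (by positivity)
  _ = (u^q)⁻¹ - ((u+1)^q)⁻¹ := by field_simp
lemma tsum_ofReal_le_of_sum_le {f : ℕ → ℝ≥0∞} {c : ℝ≥0∞}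
    (h : ∀ n, ∑ i ∈ Finset.range n, f i ≤ c) : ∑' i, f i ≤ c := by
  rw [ENNReal.tsum_eq_iSup_sum]
  apply iSup_le
  intro F
  obtain ⟨n, hn⟩ := F.exists_nat_subset_range
  exact le_trans (Finset.sum_le_sum_of_subset hn) (h n)

lemma tsum_tele {q : ℝ} (hq : 0 < q) {b : ℕ} (hb : 2 ≤ b) :
    ∑' i : ℕ, ENNReal.ofReal (((b:ℝ)+(i:ℝ)) ^ (-(q+1))) ≤
      ENNReal.ofReal (((b:ℝ)-1)^(-q) / q) := by
  have hb2 : (2:ℝ) ≤ (b:ℝ) := by exact_mod_cast hb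
  set g : ℕ → ℝ := fun i => ((b:ℝ)-1+i)^(-q) / q with hg
  have hterm : ∀ i : ℕ, ((b:ℝ)+(i:ℝ)) ^ (-(q+1)) ≤ g i - g (i+1) := by
    intro i
    have hi0 : (0:ℝ) ≤ i := Nat.cast_nonneg i
    have hu : (1:ℝ) ≤ (b:ℝ)-1+i := by linarith
    have h := rpow_tele hq hu
    have e1 : ((b:ℝ)-1+i)+1 = (b:ℝ)+i := by ring
    rw [e1] at h
    have e2 : g (i+1) = ((b:ℝ)+i)^(-q) / q := by
      simp only [hg]
      congr 2
      push_cast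
      ring
    have e3 : g i - g (i+1) = (((b:ℝ)-1+i)^(-q) - ((b:ℝ)+i)^(-q))/q := by
      rw [e2]; simp only [hg]; ring
    rw [e3, le_div_iff₀ hq]
    linarith [h]
  have hnn : ∀ i : ℕ, (0:ℝ) ≤ ((b:ℝ)+(i:ℝ)) ^ (-(q+1)) := by
    intro i
    have : (0:ℝ) ≤ (b:ℝ)+(i:ℝ) := by positivity
    exact Real.rpow_nonneg this _
  calc ∑' i : ℕ, ENNReal.ofReal (((b:ℝ)+(i:ℝ)) ^ (-(q+1)))
      ≤ ∑' i : ℕ, ENNReal.ofReal (g i - g (i+1)) :=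
        ENNReal.tsum_le_tsum (fun i => ENNReal.ofReal_le_ofReal (hterm i))
  _ ≤ ENNReal.ofReal (g 0) := by
        apply tsum_ofReal_le_of_sum_le
        intro n
        rw [← ENNReal.ofReal_sum_of_nonneg (fun i _ => le_trans (hnn i) (hterm i))]
        apply ENNReal.ofReal_le_ofReal
        rw [Finset.sum_range_sub' g n]
        have hgn : 0 ≤ g n := by
          apply div_nonneg _ hq.le
          apply Real.rpow_nonneg
          have : (0:ℝ) ≤ n := Nat.cast_nonneg n
          linarith
        linarith
  _ = ENNReal.ofReal (((b:ℝ)-1)^(-q) / q) := by simp [hg]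

lemma piece_bound {a : ℕ} (ha : 1 ≤ a) (S : Set ℝ) (h0 : (0:ℝ) ∉ S) :
    volume (br a ∩ pierceT ⁻¹' S) ≤
      ENNReal.ofReal ((a:ℝ)⁻¹) * volume (Set.Ioc (0:ℝ) (1/(((a+1):ℕ):ℝ)) ∩ S) := by
  refine (vol_branch ha S).trans (mul_le_mul_right (measure_mono ?_) _)
  intro y hy
  rcases hy with ⟨hyS, hy0, hyc⟩
  have hy0' : y ≠ 0 := fun h => h0 (h ▸ hyS)
  have hpos : (0:ℝ) < y := lt_of_le_of_ne hy0 (Ne.symm hy0')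
  refine ⟨⟨hpos, ?_⟩, hyS⟩
  push_cast
  linarith

lemma zero_notin_Ple (k M : ℕ) : ¬ (pierceD1 (pierceT^[k] (0:ℝ)) ≤ (M:ℕ∞)) := by
  rw [iterate_pierceT_zero]
  simp [pierceD1]
lemma rpow_two_eq (A : ℝ) (hA : 0 ≤ A) : A ^ ((2:ℝ)) = A * A := by
  rw [show (2:ℝ) = ((2:ℕ):ℝ) by norm_num, Real.rpow_natCast]
  ring

lemma claimP {s : ℝ} (hs : 0 < s) (hs1 : s ≤ 1) (k M : ℕ) :
    ∀ b : ℕ, 2 ≤ b →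
    volume {x ∈ Set.Ioc (0:ℝ) (1/(b:ℝ)) | pierceD1 (pierceT^[k] x) ≤ (M:ℕ∞)} ≤
      ENNReal.ofReal ((M:ℝ)^s * ((1+s)⁻¹)^(k+1) * ((b:ℝ)-1)^(-(1+s))) := by
  have hs0 : (0:ℝ) < 1 + s := by linarith
  induction k with
  | zero =>
    intro b hb
    have hb1 : 1 ≤ b := by omega
    have hbR : (2:ℝ) ≤ (b:ℝ) := by exact_mod_cast hb
    -- covering
    have hsub : {x ∈ Set.Ioc (0:ℝ) (1/(b:ℝ)) | pierceD1 (pierceT^[0] x) ≤ (M:ℕ∞)} ⊆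
        ⋃ i : ℕ, (if b + i ≤ M then br (b + i) else ∅) := by
      intro x hx
      obtain ⟨hxI, hxD⟩ := hx
      simp only [Function.iterate_zero_apply] at hxD
      rw [pierceD1_le_coe_iff] at hxD
      obtain ⟨hx0, hfl⟩ := hxD
      have hge := br_floor_ge hb1 hxI
      have hx1 : x ≤ 1 := hxI.2.trans (by
        rw [div_le_one (by exact_mod_cast (by omega : 0 < b))]
        exact_mod_cast hb1)
      refine Set.mem_iUnion.2 ⟨⌊1/x⌋₊ - b, ?_⟩
      rw [show b + (⌊1/x⌋₊ - b) = ⌊1/x⌋₊ by omega, if_pos hfl]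
      exact mem_br_self hxI.1 hx1
    refine (measure_mono hsub).trans ((measure_iUnion_le _).trans ?_)
    have hpiece : ∀ i : ℕ, volume (if b + i ≤ M then br (b + i) else ∅) ≤
        ENNReal.ofReal ((M:ℝ)^s * ((b:ℝ)+(i:ℝ)) ^ (-((1+s)+1))) := by
      intro i
      have hAR : (0:ℝ) < (b:ℝ)+(i:ℝ) := by positivity
      by_cases h : b + i ≤ M
      · rw [if_pos h]
        refine (vol_br (b+i) (by omega)).trans (ENNReal.ofReal_le_ofReal ?_)
        have hcast : (((b+i:ℕ)):ℝ) = (b:ℝ)+(i:ℝ) := by push_cast; ring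
        rw [hcast]
        set A := (b:ℝ)+(i:ℝ) with hA
        have h1 : 1/(A*(A+1)) ≤ A ^ (-(2:ℝ)) := by
          rw [Real.rpow_neg hAR.le, rpow_two_eq A hAR.le]
          rw [one_div]
          apply inv_anti₀ (by positivity)
          nlinarith
        have h2 : A ^ (-(2:ℝ)) = A ^ (-((1+s)+1)) * A ^ s := by
          rw [← Real.rpow_add hAR]
          congr 1
          ring
        have h3 : A ^ s ≤ (M:ℝ) ^ s := by
          apply Real.rpow_le_rpow hAR.le _ hs.le
          rw [hA]
          push_cast
          exact_mod_cast (by exact_mod_cast h : ((b+i:ℕ):ℝ) ≤ (M:ℝ))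
        calc 1/(A*(A+1)) ≤ A ^ (-(2:ℝ)) := h1
        _ = A ^ (-((1+s)+1)) * A ^ s := h2
        _ ≤ A ^ (-((1+s)+1)) * (M:ℝ)^s := by
            apply mul_le_mul_of_nonneg_left h3 (Real.rpow_nonneg hAR.le _)
        _ = (M:ℝ)^s * A ^ (-((1+s)+1)) := by ring
      · rw [if_neg h]
        simp
    refine (ENNReal.tsum_le_tsum hpiece).trans ?_
    have hM : (0:ℝ) ≤ (M:ℝ)^s := Real.rpow_nonneg (Nat.cast_nonneg M) s
    calc ∑' i : ℕ, ENNReal.ofReal ((M:ℝ)^s * ((b:ℝ)+(i:ℝ)) ^ (-((1+s)+1)))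
        = ENNReal.ofReal ((M:ℝ)^s) * ∑' i : ℕ, ENNReal.ofReal (((b:ℝ)+(i:ℝ)) ^ (-((1+s)+1))) := by
          rw [← ENNReal.tsum_mul_left]
          congr 1
          funext i
          rw [← ENNReal.ofReal_mul hM]
    _ ≤ ENNReal.ofReal ((M:ℝ)^s) * ENNReal.ofReal (((b:ℝ)-1)^(-(1+s)) / (1+s)) :=
          mul_le_mul_right (tsum_tele hs0 hb) _
    _ = ENNReal.ofReal ((M:ℝ)^s * (((b:ℝ)-1)^(-(1+s)) / (1+s))) := by
          rw [← ENNReal.ofReal_mul hM]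
    _ ≤ ENNReal.ofReal ((M:ℝ)^s * ((1+s)⁻¹)^(0+1) * ((b:ℝ)-1)^(-(1+s))) := by
          apply ENNReal.ofReal_le_ofReal
          apply le_of_eq
          rw [pow_one]
          ring
  | succ k ih =>
    intro b hb
    have hb1 : 1 ≤ b := by omega
    set S : Set ℝ := {y | pierceD1 (pierceT^[k] y) ≤ (M:ℕ∞)} with hS
    have h0S : (0:ℝ) ∉ S := zero_notin_Ple k M
    have hsub : {x ∈ Set.Ioc (0:ℝ) (1/(b:ℝ)) | pierceD1 (pierceT^[k+1] x) ≤ (M:ℕ∞)} ⊆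
        ⋃ i : ℕ, (br (b + i) ∩ pierceT ⁻¹' S) := by
      intro x hx
      obtain ⟨hxI, hxD⟩ := hx
      have hx1 : x ≤ 1 := hxI.2.trans (by
        rw [div_le_one (by exact_mod_cast (by omega : 0 < b))]
        exact_mod_cast hb1)
      have hge := br_floor_ge hb1 hxI
      refine Set.mem_iUnion.2 ⟨⌊1/x⌋₊ - b, ?_⟩
      rw [show b + (⌊1/x⌋₊ - b) = ⌊1/x⌋₊ by omega]
      refine ⟨mem_br_self hxI.1 hx1, ?_⟩
      show pierceT x ∈ S
      rw [hS, Set.mem_setOf_eq, ← Function.iterate_succ_apply]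
      exact hxD
    refine (measure_mono hsub).trans ((measure_iUnion_le _).trans ?_)
    have hpiece : ∀ i : ℕ, volume (br (b + i) ∩ pierceT ⁻¹' S) ≤
        ENNReal.ofReal (((M:ℝ)^s * ((1+s)⁻¹)^(k+1)) * ((b:ℝ)+(i:ℝ)) ^ (-((1+s)+1))) := by
      intro i
      have hAR : (0:ℝ) < (b:ℝ)+(i:ℝ) := by positivity
      refine (piece_bound (by omega) S h0S).trans ?_
      have hIH : volume (Set.Ioc (0:ℝ) (1/(((b+i+1):ℕ):ℝ)) ∩ S) ≤
          ENNReal.ofReal ((M:ℝ)^s * ((1+s)⁻¹)^(k+1) * (((b+i+1:ℕ):ℝ)-1)^(-(1+s))) := by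
        exact ih (b+i+1) (by omega)
      have hcast1 : (((b+i)+1:ℕ):ℝ) = ((b+i+1:ℕ):ℝ) := by norm_num
      rw [hcast1]
      refine (mul_le_mul_right hIH _).trans ?_
      have hcast2 : (((b+i+1:ℕ)):ℝ) - 1 = (b:ℝ)+(i:ℝ) := by push_cast; ring
      rw [hcast2]
      have hcast3 : (((b+i):ℕ):ℝ) = (b:ℝ)+(i:ℝ) := by push_cast; ring
      rw [hcast3]
      rw [← ENNReal.ofReal_mul (by positivity : (0:ℝ) ≤ ((b:ℝ)+(i:ℝ))⁻¹)]
      apply ENNReal.ofReal_le_ofReal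
      apply le_of_eq
      have e : ((b:ℝ)+(i:ℝ)) ^ (-((1+s)+1)) = ((b:ℝ)+(i:ℝ))⁻¹ * ((b:ℝ)+(i:ℝ)) ^ (-(1+s)) := by
        rw [← Real.rpow_neg_one ((b:ℝ)+(i:ℝ)), ← Real.rpow_add hAR]
        congr 1
        ring
      rw [e]
      ring
    refine (ENNReal.tsum_le_tsum hpiece).trans ?_
    have hMk : (0:ℝ) ≤ (M:ℝ)^s * ((1+s)⁻¹)^(k+1) := by positivity
    calc ∑' i : ℕ, ENNReal.ofReal (((M:ℝ)^s * ((1+s)⁻¹)^(k+1)) * ((b:ℝ)+(i:ℝ)) ^ (-((1+s)+1)))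
        = ENNReal.ofReal ((M:ℝ)^s * ((1+s)⁻¹)^(k+1)) *
            ∑' i : ℕ, ENNReal.ofReal (((b:ℝ)+(i:ℝ)) ^ (-((1+s)+1))) := by
          rw [← ENNReal.tsum_mul_left]
          congr 1
          funext i
          rw [← ENNReal.ofReal_mul hMk]
    _ ≤ ENNReal.ofReal ((M:ℝ)^s * ((1+s)⁻¹)^(k+1)) *
          ENNReal.ofReal (((b:ℝ)-1)^(-(1+s)) / (1+s)) :=
          mul_le_mul_right (tsum_tele hs0 hb) _
    _ = ENNReal.ofReal (((M:ℝ)^s * ((1+s)⁻¹)^(k+1)) * (((b:ℝ)-1)^(-(1+s)) / (1+s))) := by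
          rw [← ENNReal.ofReal_mul hMk]
    _ ≤ ENNReal.ofReal ((M:ℝ)^s * ((1+s)⁻¹)^(k+1+1) * ((b:ℝ)-1)^(-(1+s))) := by
          apply ENNReal.ofReal_le_ofReal
          apply le_of_eq
          rw [pow_succ]
          ring
lemma piece_bound' {a : ℕ} (ha : 1 ≤ a) (S : Set ℝ) :
    volume (br a ∩ pierceT ⁻¹' S) ≤
      ENNReal.ofReal ((a:ℝ)⁻¹) * volume (Set.Ioc (0:ℝ) (1/(((a+1):ℕ):ℝ)) ∩ S) := by
  refine (vol_branch ha S).trans (mul_le_mul_right ?_ _)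
  have hsub : S ∩ Set.Ico 0 (1/((a:ℝ)+1)) ⊆
      (Set.Ioc (0:ℝ) (1/(((a+1):ℕ):ℝ)) ∩ S) ∪ {0} := by
    intro y hy
    rcases hy with ⟨hyS, hy0, hyc⟩
    by_cases h : y = 0
    · exact Or.inr h
    · refine Or.inl ⟨⟨lt_of_le_of_ne hy0 (Ne.symm h), ?_⟩, hyS⟩
      push_cast
      linarith
  refine (measure_mono hsub).trans ((measure_union_le _ _).trans ?_)
  simp

lemma rpow_neg_anti {x y : ℝ} (hx : 0 < x) (hxy : x ≤ y) {t : ℝ} (ht : 0 ≤ t) :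
    y^(-t) ≤ x^(-t) := by
  rw [Real.rpow_neg (hx.trans_le hxy).le, Real.rpow_neg hx.le]
  exact inv_anti₀ (Real.rpow_pos_of_pos hx t) (Real.rpow_le_rpow hx.le hxy ht)

lemma claimQ {s : ℝ} (hs : 0 < s) (hs1 : s < 1) (k : ℕ) {M : ℕ} (hM : 1 ≤ M) :
    ∀ b : ℕ, 2 ≤ b →
    volume {x ∈ Set.Ioc (0:ℝ) (1/(b:ℝ)) | (M:ℕ∞) ≤ pierceD1 (pierceT^[k] x)} ≤
      ENNReal.ofReal ((M:ℝ)^(-s) * ((1-s)⁻¹)^(k+1) * ((b:ℝ)-1)^(-(1-s))) := by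
  have hq0 : (0:ℝ) < 1 - s := by linarith
  have hMR : (1:ℝ) ≤ (M:ℝ) := by exact_mod_cast hM
  have hrho : (1:ℝ) ≤ (1-s)⁻¹ := by
    rw [le_inv_comm₀ one_pos hq0]
    linarith
  induction k with
  | zero =>
    intro b hb
    have hb1 : 1 ≤ b := by omega
    have hbR : (2:ℝ) ≤ (b:ℝ) := by exact_mod_cast hb
    have hb0R : (0:ℝ) < (b:ℝ) := by linarith
    set c : ℕ := max b M with hc
    have hcR : (0:ℝ) < (c:ℝ) := by
      have : 1 ≤ c := le_trans hb1 (le_max_left _ _)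
      exact_mod_cast this
    have hsub : {x ∈ Set.Ioc (0:ℝ) (1/(b:ℝ)) | (M:ℕ∞) ≤ pierceD1 (pierceT^[0] x)} ⊆
        Set.Ioc (0:ℝ) (1/(c:ℝ)) := by
      intro x hx
      obtain ⟨hxI, hxD⟩ := hx
      simp only [Function.iterate_zero_apply] at hxD
      rw [coe_le_pierceD1_iff] at hxD
      have hx0 : 0 < x := hxI.1
      rcases hxD with h | h
      · exact absurd h hx0.ne'
      refine ⟨hx0, ?_⟩
      rw [le_one_div_comm hx0 hcR]
      have hMx : (M:ℝ) ≤ 1/x :=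
        le_trans (by exact_mod_cast h) (Nat.floor_le (by positivity))
      have hbx : (b:ℝ) ≤ 1/x := (le_one_div_comm hb0R hx0).mpr hxI.2
      rw [hc, Nat.cast_max]
      exact max_le hbx hMx
    refine (measure_mono hsub).trans ?_
    rw [Real.volume_Ioc, sub_zero]
    apply ENNReal.ofReal_le_ofReal
    have e1 : 1/(c:ℝ) = (c:ℝ)^(-s) * (c:ℝ)^(-(1-s)) := by
      rw [← Real.rpow_add hcR]
      rw [show -s + -(1-s) = (-1:ℝ) by ring, Real.rpow_neg_one, one_div]
    have hA : (c:ℝ)^(-s) ≤ (M:ℝ)^(-s) :=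
      rpow_neg_anti (by linarith) (by exact_mod_cast le_max_right b M) hs.le
    have hbc : (b:ℝ) ≤ (c:ℝ) := by exact_mod_cast le_max_left b M
    have hB : (c:ℝ)^(-(1-s)) ≤ ((b:ℝ)-1)^(-(1-s)) :=
      rpow_neg_anti (by linarith) (by linarith) hq0.le
    have hApos : (0:ℝ) ≤ (c:ℝ)^(-s) := Real.rpow_nonneg hcR.le _
    have hBpos : (0:ℝ) ≤ ((b:ℝ)-1)^(-(1-s)) := Real.rpow_nonneg (by linarith) _
    have hMpos : (0:ℝ) ≤ (M:ℝ)^(-s) := Real.rpow_nonneg (by linarith) _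
    calc 1/(c:ℝ) = (c:ℝ)^(-s) * (c:ℝ)^(-(1-s)) := e1
    _ ≤ (M:ℝ)^(-s) * ((b:ℝ)-1)^(-(1-s)) := mul_le_mul hA hB (Real.rpow_nonneg hcR.le _) hMpos
    _ = (M:ℝ)^(-s) * 1 * ((b:ℝ)-1)^(-(1-s)) := by ring
    _ ≤ (M:ℝ)^(-s) * ((1-s)⁻¹)^(0+1) * ((b:ℝ)-1)^(-(1-s)) := by
        apply mul_le_mul_of_nonneg_right _ hBpos
        apply mul_le_mul_of_nonneg_left _ hMpos
        rw [pow_one]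
        exact hrho
  | succ k ih =>
    intro b hb
    have hb1 : 1 ≤ b := by omega
    set S : Set ℝ := {y | (M:ℕ∞) ≤ pierceD1 (pierceT^[k] y)} with hS
    have hsub : {x ∈ Set.Ioc (0:ℝ) (1/(b:ℝ)) | (M:ℕ∞) ≤ pierceD1 (pierceT^[k+1] x)} ⊆
        ⋃ i : ℕ, (br (b + i) ∩ pierceT ⁻¹' S) := by
      intro x hx
      obtain ⟨hxI, hxD⟩ := hx
      have hx1 : x ≤ 1 := hxI.2.trans (by
        rw [div_le_one (by exact_mod_cast (by omega : 0 < b))]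
        exact_mod_cast hb1)
      have hge := br_floor_ge hb1 hxI
      refine Set.mem_iUnion.2 ⟨⌊1/x⌋₊ - b, ?_⟩
      rw [show b + (⌊1/x⌋₊ - b) = ⌊1/x⌋₊ by omega]
      refine ⟨mem_br_self hxI.1 hx1, ?_⟩
      show pierceT x ∈ S
      rw [hS, Set.mem_setOf_eq, ← Function.iterate_succ_apply]
      exact hxD
    refine (measure_mono hsub).trans ((measure_iUnion_le _).trans ?_)
    have hpiece : ∀ i : ℕ, volume (br (b + i) ∩ pierceT ⁻¹' S) ≤
        ENNReal.ofReal (((M:ℝ)^(-s) * ((1-s)⁻¹)^(k+1)) * ((b:ℝ)+(i:ℝ)) ^ (-((1-s)+1))) := by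
      intro i
      have hAR : (0:ℝ) < (b:ℝ)+(i:ℝ) := by positivity
      refine (piece_bound' (by omega) S).trans ?_
      have hIH : volume (Set.Ioc (0:ℝ) (1/(((b+i+1):ℕ):ℝ)) ∩ S) ≤
          ENNReal.ofReal ((M:ℝ)^(-s) * ((1-s)⁻¹)^(k+1) * (((b+i+1:ℕ):ℝ)-1)^(-(1-s))) :=
        ih (b+i+1) (by omega)
      have hcast1 : (((b+i)+1:ℕ):ℝ) = ((b+i+1:ℕ):ℝ) := by norm_num
      rw [hcast1]
      refine (mul_le_mul_right hIH _).trans ?_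
      have hcast2 : (((b+i+1:ℕ)):ℝ) - 1 = (b:ℝ)+(i:ℝ) := by push_cast; ring
      rw [hcast2]
      have hcast3 : (((b+i):ℕ):ℝ) = (b:ℝ)+(i:ℝ) := by push_cast; ring
      rw [hcast3]
      rw [← ENNReal.ofReal_mul (by positivity : (0:ℝ) ≤ ((b:ℝ)+(i:ℝ))⁻¹)]
      apply ENNReal.ofReal_le_ofReal
      apply le_of_eq
      have e : ((b:ℝ)+(i:ℝ)) ^ (-((1-s)+1)) = ((b:ℝ)+(i:ℝ))⁻¹ * ((b:ℝ)+(i:ℝ)) ^ (-(1-s)) := by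
        rw [← Real.rpow_neg_one ((b:ℝ)+(i:ℝ)), ← Real.rpow_add hAR]
        congr 1
        ring
      rw [e]
      ring
    refine (ENNReal.tsum_le_tsum hpiece).trans ?_
    have hMk : (0:ℝ) ≤ (M:ℝ)^(-s) * ((1-s)⁻¹)^(k+1) := by positivity
    calc ∑' i : ℕ, ENNReal.ofReal (((M:ℝ)^(-s) * ((1-s)⁻¹)^(k+1)) * ((b:ℝ)+(i:ℝ)) ^ (-((1-s)+1)))
        = ENNReal.ofReal ((M:ℝ)^(-s) * ((1-s)⁻¹)^(k+1)) *
            ∑' i : ℕ, ENNReal.ofReal (((b:ℝ)+(i:ℝ)) ^ (-((1-s)+1))) := by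
          rw [← ENNReal.tsum_mul_left]
          congr 1
          funext i
          rw [← ENNReal.ofReal_mul hMk]
    _ ≤ ENNReal.ofReal ((M:ℝ)^(-s) * ((1-s)⁻¹)^(k+1)) *
          ENNReal.ofReal (((b:ℝ)-1)^(-(1-s)) / (1-s)) :=
          mul_le_mul_right (tsum_tele hq0 hb) _
    _ = ENNReal.ofReal (((M:ℝ)^(-s) * ((1-s)⁻¹)^(k+1)) * (((b:ℝ)-1)^(-(1-s)) / (1-s))) := by
          rw [← ENNReal.ofReal_mul hMk]
    _ ≤ ENNReal.ofReal ((M:ℝ)^(-s) * ((1-s)⁻¹)^(k+1+1) * ((b:ℝ)-1)^(-(1-s))) := by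
          apply ENNReal.ofReal_le_ofReal
          apply le_of_eq
          rw [pow_succ]
          ring
lemma claimPtop {s : ℝ} (hs : 0 < s) (hs1 : s ≤ 1) (k M : ℕ) :
    volume {x ∈ Set.Ioc (0:ℝ) 1 | pierceD1 (pierceT^[k] x) ≤ (M:ℕ∞)} ≤
      ENNReal.ofReal (4 * (M:ℝ)^s * ((1+s)⁻¹)^(k+1)) := by
  have hs0 : (0:ℝ) < 1 + s := by linarith
  have hrho : (1:ℝ)/2 ≤ (1+s)⁻¹ := by
    rw [div_le_iff₀ (by norm_num : (0:ℝ) < 2)]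
    rw [inv_mul_eq_div, le_div_iff₀ hs0]
    linarith
  cases k with
  | zero =>
    by_cases hM : 1 ≤ M
    · have hMR : (1:ℝ) ≤ (M:ℝ)^s := by
        rw [show (1:ℝ) = (1:ℝ)^s by rw [Real.one_rpow]]
        exact Real.rpow_le_rpow one_pos.le (by exact_mod_cast hM) hs.le
      refine le_trans (measure_mono (Set.sep_subset _ _)) ?_
      rw [Real.volume_Ioc, sub_zero]
      apply ENNReal.ofReal_le_ofReal
      rw [pow_one]
      nlinarith
    · have hM0 : M = 0 := by omega
      subst hM0
      have hempty : {x ∈ Set.Ioc (0:ℝ) 1 | pierceD1 (pierceT^[0] x) ≤ ((0:ℕ):ℕ∞)} ⊆ ∅ := by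
        intro x hx
        obtain ⟨hxI, hxD⟩ := hx
        simp only [Function.iterate_zero_apply] at hxD
        rw [pierceD1_le_coe_iff] at hxD
        obtain ⟨hx0, hfl⟩ := hxD
        have h1 : (1:ℝ) ≤ 1/x := by
          rw [le_div_iff₀ hxI.1, one_mul]; exact hxI.2
        have : 1 ≤ ⌊1/x⌋₊ := (Nat.one_le_floor_iff _).2 h1
        omega
      refine le_trans (measure_mono hempty) ?_
      simp
  | succ k =>
    set S : Set ℝ := {y | pierceD1 (pierceT^[k] y) ≤ (M:ℕ∞)} with hS
    have hsub : {x ∈ Set.Ioc (0:ℝ) 1 | pierceD1 (pierceT^[k+1] x) ≤ (M:ℕ∞)} ⊆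
        {x ∈ Set.Ioc (0:ℝ) (1/((2:ℕ):ℝ)) | pierceD1 (pierceT^[k+1] x) ≤ (M:ℕ∞)} ∪
          (br 1 ∩ pierceT ⁻¹' S) := by
      intro x hx
      obtain ⟨hxI, hxD⟩ := hx
      by_cases h : x ≤ 1/((2:ℕ):ℝ)
      · exact Or.inl ⟨⟨hxI.1, h⟩, hxD⟩
      · push_neg at h
        refine Or.inr ⟨?_, ?_⟩
        · constructor
          · norm_num at h ⊢
            linarith
          · norm_num
            exact hxI.2
        · show pierceT x ∈ S
          rw [hS, Set.mem_setOf_eq, ← Function.iterate_succ_apply]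
          exact hxD
    refine (measure_mono hsub).trans ((measure_union_le _ _).trans ?_)
    have h1 : volume {x ∈ Set.Ioc (0:ℝ) (1/((2:ℕ):ℝ)) | pierceD1 (pierceT^[k+1] x) ≤ (M:ℕ∞)} ≤
        ENNReal.ofReal ((M:ℝ)^s * ((1+s)⁻¹)^(k+2)) := by
      refine (claimP hs hs1 (k+1) M 2 le_rfl).trans (ENNReal.ofReal_le_ofReal ?_)
      norm_num
    have h2 : volume (br 1 ∩ pierceT ⁻¹' S) ≤
        ENNReal.ofReal ((M:ℝ)^s * ((1+s)⁻¹)^(k+1)) := by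
      refine (piece_bound' le_rfl S).trans ?_
      have := claimP hs hs1 k M 2 le_rfl
      rw [show ((1:ℕ):ℝ)⁻¹ = 1 by norm_num, ENNReal.ofReal_one, one_mul]
      refine le_trans (measure_mono (le_refl _)) ?_
      refine le_trans ?_ (this.trans (ENNReal.ofReal_le_ofReal (by norm_num)))
      apply measure_mono
      intro y hy
      exact ⟨hy.1, hy.2⟩
    refine le_trans (add_le_add h1 h2) ?_
    rw [← ENNReal.ofReal_add (by positivity) (by positivity)]
    apply ENNReal.ofReal_le_ofReal
    have hMs : (0:ℝ) ≤ (M:ℝ)^s := Real.rpow_nonneg (Nat.cast_nonneg M) s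
    have hpow : (0:ℝ) ≤ ((1+s)⁻¹)^(k+1) := by positivity
    have key : ((1+s)⁻¹)^(k+2) + ((1+s)⁻¹)^(k+1) ≤ 4 * ((1+s)⁻¹)^(k+2) := by
      rw [pow_succ]
      nlinarith
    calc (M:ℝ)^s * ((1+s)⁻¹)^(k+2) + (M:ℝ)^s * ((1+s)⁻¹)^(k+1)
        = (M:ℝ)^s * (((1+s)⁻¹)^(k+2) + ((1+s)⁻¹)^(k+1)) := by ring
    _ ≤ (M:ℝ)^s * (4 * ((1+s)⁻¹)^(k+2)) := mul_le_mul_of_nonneg_left key hMs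
    _ = 4 * (M:ℝ)^s * ((1+s)⁻¹)^(k+1+1) := by ring

lemma claimQtop {s : ℝ} (hs : 0 < s) (hs1 : s < 1) (k : ℕ) {M : ℕ} (hM : 1 ≤ M) :
    volume {x ∈ Set.Ioc (0:ℝ) 1 | (M:ℕ∞) ≤ pierceD1 (pierceT^[k] x)} ≤
      ENNReal.ofReal (2 * (M:ℝ)^(-s) * ((1-s)⁻¹)^(k+1)) := by
  have hq0 : (0:ℝ) < 1 - s := by linarith
  have hMR : (1:ℝ) ≤ (M:ℝ) := by exact_mod_cast hM
  have hrho : (1:ℝ) ≤ (1-s)⁻¹ := by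
    rw [le_inv_comm₀ one_pos hq0]
    linarith
  cases k with
  | zero =>
    have hsub : {x ∈ Set.Ioc (0:ℝ) 1 | (M:ℕ∞) ≤ pierceD1 (pierceT^[0] x)} ⊆
        Set.Ioc (0:ℝ) (1/(M:ℝ)) := by
      intro x hx
      obtain ⟨hxI, hxD⟩ := hx
      simp only [Function.iterate_zero_apply] at hxD
      rw [coe_le_pierceD1_iff] at hxD
      have hx0 : 0 < x := hxI.1
      rcases hxD with h | h
      · exact absurd h hx0.ne'
      refine ⟨hx0, ?_⟩
      rw [le_one_div_comm hx0 (by linarith : (0:ℝ) < (M:ℝ))]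
      exact le_trans (by exact_mod_cast h) (Nat.floor_le (by positivity))
    refine (measure_mono hsub).trans ?_
    rw [Real.volume_Ioc, sub_zero]
    apply ENNReal.ofReal_le_ofReal
    have h1 : 1/(M:ℝ) = (M:ℝ)^(-(1:ℝ)) := by
      rw [Real.rpow_neg_one, one_div]
    have h2 : (M:ℝ)^(-(1:ℝ)) ≤ (M:ℝ)^(-s) :=
      Real.rpow_le_rpow_of_exponent_le hMR (by linarith)
    have hMs : (0:ℝ) ≤ (M:ℝ)^(-s) := Real.rpow_nonneg (by linarith) _
    rw [h1, pow_one]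
    nlinarith
  | succ k =>
    set S : Set ℝ := {y | (M:ℕ∞) ≤ pierceD1 (pierceT^[k] y)} with hS
    have hsub : {x ∈ Set.Ioc (0:ℝ) 1 | (M:ℕ∞) ≤ pierceD1 (pierceT^[k+1] x)} ⊆
        {x ∈ Set.Ioc (0:ℝ) (1/((2:ℕ):ℝ)) | (M:ℕ∞) ≤ pierceD1 (pierceT^[k+1] x)} ∪
          (br 1 ∩ pierceT ⁻¹' S) := by
      intro x hx
      obtain ⟨hxI, hxD⟩ := hx
      by_cases h : x ≤ 1/((2:ℕ):ℝ)
      · exact Or.inl ⟨⟨hxI.1, h⟩, hxD⟩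
      · push_neg at h
        refine Or.inr ⟨?_, ?_⟩
        · constructor
          · norm_num at h ⊢
            linarith
          · norm_num
            exact hxI.2
        · show pierceT x ∈ S
          rw [hS, Set.mem_setOf_eq, ← Function.iterate_succ_apply]
          exact hxD
    refine (measure_mono hsub).trans ((measure_union_le _ _).trans ?_)
    have h1 : volume {x ∈ Set.Ioc (0:ℝ) (1/((2:ℕ):ℝ)) | (M:ℕ∞) ≤ pierceD1 (pierceT^[k+1] x)} ≤
        ENNReal.ofReal ((M:ℝ)^(-s) * ((1-s)⁻¹)^(k+2)) := by
      refine (claimQ hs hs1 (k+1) hM 2 le_rfl).trans (ENNReal.ofReal_le_ofReal ?_)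
      norm_num
    have h2 : volume (br 1 ∩ pierceT ⁻¹' S) ≤
        ENNReal.ofReal ((M:ℝ)^(-s) * ((1-s)⁻¹)^(k+1)) := by
      refine (piece_bound' le_rfl S).trans ?_
      have := claimQ hs hs1 k hM 2 le_rfl
      rw [show ((1:ℕ):ℝ)⁻¹ = 1 by norm_num, ENNReal.ofReal_one, one_mul]
      refine le_trans ?_ (this.trans (ENNReal.ofReal_le_ofReal (by norm_num)))
      apply measure_mono
      intro y hy
      exact ⟨hy.1, hy.2⟩
    refine le_trans (add_le_add h1 h2) ?_
    rw [← ENNReal.ofReal_add (by positivity) (by positivity)]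
    apply ENNReal.ofReal_le_ofReal
    have hMs : (0:ℝ) ≤ (M:ℝ)^(-s) := Real.rpow_nonneg (by linarith) _
    have hpow : (0:ℝ) ≤ ((1-s)⁻¹)^(k+1) := by positivity
    have key : ((1-s)⁻¹)^(k+2) + ((1-s)⁻¹)^(k+1) ≤ 2 * ((1-s)⁻¹)^(k+2) := by
      rw [pow_succ]
      nlinarith
    calc (M:ℝ)^(-s) * ((1-s)⁻¹)^(k+2) + (M:ℝ)^(-s) * ((1-s)⁻¹)^(k+1)
        = (M:ℝ)^(-s) * (((1-s)⁻¹)^(k+2) + ((1-s)⁻¹)^(k+1)) := by ring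
    _ ≤ (M:ℝ)^(-s) * (2 * ((1-s)⁻¹)^(k+2)) := mul_le_mul_of_nonneg_left key hMs
    _ = 2 * (M:ℝ)^(-s) * ((1-s)⁻¹)^(k+1+1) := by ring
noncomputable def Elow (ε : ℝ) (k : ℕ) : Set ℝ :=
  {x ∈ Set.Ioc (0:ℝ) 1 |
    pierceD1 (pierceT^[k] x) ≤ ((⌊Real.exp ((1-ε)*((k:ℝ)+1))⌋₊ : ℕ) : ℕ∞)}

noncomputable def Ehigh (ε : ℝ) (k : ℕ) : Set ℝ :=
  {x ∈ Set.Ioc (0:ℝ) 1 |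
    ((⌈Real.exp ((1+ε)*((k:ℝ)+1))⌉₊ : ℕ) : ℕ∞) ≤ pierceD1 (pierceT^[k] x)}

lemma geom_tsum_ne_top {c r : ℝ} (hc : 0 ≤ c) (hr0 : 0 ≤ r) (hr1 : r < 1)
    {f : ℕ → Set ℝ} (hf : ∀ k, volume (f k) ≤ ENNReal.ofReal (c * r^(k+1))) :
    (∑' k, volume (f k)) ≠ ⊤ := by
  have hsum : Summable (fun k : ℕ => c * r^(k+1)) := by
    have : (fun k : ℕ => c * r^(k+1)) = (fun k : ℕ => (c*r) * r^k) := by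
      funext k
      ring
    rw [this]
    exact (summable_geometric_of_lt_one hr0 hr1).mul_left _
  have h1 : (∑' k, volume (f k)) ≤ ∑' k : ℕ, ENNReal.ofReal (c * r^(k+1)) :=
    ENNReal.tsum_le_tsum hf
  rw [← ENNReal.ofReal_tsum_of_nonneg (fun k => by positivity) hsum] at h1
  exact ne_top_of_le_ne_top ENNReal.ofReal_ne_top h1

lemma exp_fact_low {ε : ℝ} (hε0 : 0 < ε) (hε1 : ε < 1) :
    Real.exp ((1-ε)*ε) * (1+ε)⁻¹ < 1 := by
  set t : ℝ := (1-ε)*ε with ht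
  have h1t : 0 < 1 - t := by nlinarith
  have he : Real.exp t * (1-t) ≤ 1 := by
    have h := Real.add_one_le_exp (-t)
    have h2 : 1 - t ≤ (Real.exp t)⁻¹ := by
      rw [← Real.exp_neg]
      linarith
    calc Real.exp t * (1-t) ≤ Real.exp t * (Real.exp t)⁻¹ :=
          mul_le_mul_of_nonneg_left h2 (Real.exp_pos t).le
    _ = 1 := mul_inv_cancel₀ (Real.exp_pos t).ne'
  have hkey : (1 + ε) * (1 - t) = 1 + ε^3 := by
    rw [ht]
    ring
  have hexp : Real.exp t < 1 + ε := by
    have h3 : Real.exp t * (1-t) < (1+ε) * (1-t) := by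
      rw [hkey]
      nlinarith [pow_pos hε0 3]
    exact lt_of_mul_lt_mul_right h3 (by linarith)
  have := (div_lt_one (by linarith : (0:ℝ) < 1+ε)).mpr hexp
  rwa [div_eq_mul_inv] at this

lemma exp_fact_high {ε : ℝ} (hε0 : 0 < ε) (hε1 : ε < 1) :
    Real.exp (-(ε/2)*(1+ε)) * (1-ε/2)⁻¹ < 1 := by
  set u : ℝ := (ε/2)*(1+ε) with hu
  have hu0 : 0 < u := by positivity
  have hs0 : 0 < 1 - ε/2 := by linarith
  have h := Real.add_one_le_exp u
  have hkey : (1 - ε/2) * (1 + u) = 1 + ε^2/4 - ε^3/4 := by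
    rw [hu]
    ring
  have h2 : 1 < (1 - ε/2) * Real.exp u := by
    calc (1:ℝ) < (1 - ε/2) * (1 + u) := by
          rw [hkey]
          nlinarith [mul_pos (mul_pos hε0 hε0) (by linarith : (0:ℝ) < 1 - ε)]
    _ ≤ (1 - ε/2) * Real.exp u := by
          apply mul_le_mul_of_nonneg_left _ hs0.le
          linarith
  have hneg : Real.exp (-(ε/2)*(1+ε)) = (Real.exp u)⁻¹ := by
    rw [hu, ← Real.exp_neg]
    congr 1
    ring
  rw [hneg, ← mul_inv]
  exact inv_lt_one_of_one_lt₀ (by linarith [h2, mul_comm (1 - ε/2) (Real.exp u)])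
lemma Elow_meas_bound {ε : ℝ} (hε0 : 0 < ε) (hε1 : ε < 1) (k : ℕ) :
    volume (Elow ε k) ≤
      ENNReal.ofReal (4 * (Real.exp ((1-ε)*ε) * (1+ε)⁻¹)^(k+1)) := by
  refine (claimPtop hε0 hε1.le k _).trans (ENNReal.ofReal_le_ofReal ?_)
  set M : ℕ := ⌊Real.exp ((1-ε)*((k:ℝ)+1))⌋₊ with hM
  have h1 : (M:ℝ)^ε ≤ (Real.exp ((1-ε)*((k:ℝ)+1)))^ε :=
    Real.rpow_le_rpow (Nat.cast_nonneg M) (Nat.floor_le (Real.exp_pos _).le) hε0.le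
  have h2 : (Real.exp ((1-ε)*((k:ℝ)+1)))^ε = (Real.exp ((1-ε)*ε))^(k+1) := by
    rw [← Real.exp_mul, ← Real.exp_nat_mul]
    congr 1
    push_cast
    ring
  have h3 : (M:ℝ)^ε ≤ (Real.exp ((1-ε)*ε))^(k+1) := by rw [← h2]; exact h1
  calc 4 * (M:ℝ)^ε * ((1+ε)⁻¹)^(k+1)
      ≤ 4 * (Real.exp ((1-ε)*ε))^(k+1) * ((1+ε)⁻¹)^(k+1) := by
        apply mul_le_mul_of_nonneg_right _ (pow_nonneg (inv_nonneg.2 (by linarith)) _)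
        nlinarith [Real.rpow_nonneg (Nat.cast_nonneg M) ε]
  _ = 4 * (Real.exp ((1-ε)*ε) * (1+ε)⁻¹)^(k+1) := by
        rw [mul_pow]
        ring

lemma Ehigh_meas_bound {ε : ℝ} (hε0 : 0 < ε) (hε1 : ε < 1) (k : ℕ) :
    volume (Ehigh ε k) ≤
      ENNReal.ofReal (2 * (Real.exp (-(ε/2)*(1+ε)) * (1-ε/2)⁻¹)^(k+1)) := by
  set M : ℕ := ⌈Real.exp ((1+ε)*((k:ℝ)+1))⌉₊ with hM
  have hM1 : 1 ≤ M := Nat.one_le_ceil_iff.2 (Real.exp_pos _)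
  have hs0 : (0:ℝ) < ε/2 := by positivity
  have hs1 : ε/2 < 1 := by linarith
  refine (claimQtop hs0 hs1 k hM1).trans (ENNReal.ofReal_le_ofReal ?_)
  have h1 : (M:ℝ)^(-(ε/2)) ≤ (Real.exp ((1+ε)*((k:ℝ)+1)))^(-(ε/2)) :=
    rpow_neg_anti (Real.exp_pos _) (Nat.le_ceil _) hs0.le
  have h2 : (Real.exp ((1+ε)*((k:ℝ)+1)))^(-(ε/2)) = (Real.exp (-(ε/2)*(1+ε)))^(k+1) := by
    rw [← Real.exp_mul, ← Real.exp_nat_mul]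
    congr 1
    push_cast
    ring
  have h3 : (M:ℝ)^(-(ε/2)) ≤ (Real.exp (-(ε/2)*(1+ε)))^(k+1) := by rw [← h2]; exact h1
  have hMnn : (0:ℝ) ≤ (M:ℝ)^(-(ε/2)) := Real.rpow_nonneg (Nat.cast_nonneg M) _
  calc 2 * (M:ℝ)^(-(ε/2)) * ((1-ε/2)⁻¹)^(k+1)
      ≤ 2 * (Real.exp (-(ε/2)*(1+ε)))^(k+1) * ((1-ε/2)⁻¹)^(k+1) := by
        apply mul_le_mul_of_nonneg_right _ (pow_nonneg (inv_nonneg.2 (by linarith)) _)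
        nlinarith
  _ = 2 * (Real.exp (-(ε/2)*(1+ε)) * (1-ε/2)⁻¹)^(k+1) := by
        rw [mul_pow]
        ring

lemma ae_low {ε : ℝ} (hε0 : 0 < ε) (hε1 : ε < 1) :
    ∀ᵐ x, ∀ᶠ k in atTop, x ∉ Elow ε k :=
  ae_eventually_notMem (geom_tsum_ne_top (by norm_num)
    (mul_nonneg (Real.exp_pos _).le (inv_nonneg.2 (by linarith)))
    (exp_fact_low hε0 hε1) (Elow_meas_bound hε0 hε1))

lemma ae_high {ε : ℝ} (hε0 : 0 < ε) (hε1 : ε < 1) :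
    ∀ᵐ x, ∀ᶠ k in atTop, x ∉ Ehigh ε k :=
  ae_eventually_notMem (geom_tsum_ne_top (by norm_num)
    (mul_nonneg (Real.exp_pos _).le (inv_nonneg.2 (by linarith)))
    (exp_fact_high hε0 hε1) (Ehigh_meas_bound hε0 hε1))
end Pf18

open Pf18 in
theorem stmt18 :
    ∀ᵐ x ∂(volume.restrict (Set.Icc (0 : ℝ) 1)),
      Tendsto (fun n : ℕ => enlog (pierceDigit n x) / (n : ℝ≥0∞)) atTop (𝓝 (1 : ℝ≥0∞)) := by
  have hεpos : ∀ j : ℕ, (0:ℝ) < 1/((j:ℝ)+2) := fun j => by positivity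
  have hεlt : ∀ j : ℕ, 1/((j:ℝ)+2) < 1 := fun j => by
    rw [div_lt_one (by positivity)]
    have : (0:ℝ) ≤ (j:ℝ) := Nat.cast_nonneg j
    linarith
  have hae : ∀ᵐ x ∂(volume : Measure ℝ), ∀ j : ℕ,
      (∀ᶠ k in atTop, x ∉ Elow (1/((j:ℝ)+2)) k) ∧
      (∀ᶠ k in atTop, x ∉ Ehigh (1/((j:ℝ)+2)) k) := by
    rw [ae_all_iff]
    intro j
    exact (ae_low (hεpos j) (hεlt j)).and (ae_high (hεpos j) (hεlt j))
  have hae' := ae_restrict_of_ae (μ := volume) (s := Set.Icc (0:ℝ) 1) hae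
  have hmem : ∀ᵐ x ∂(volume.restrict (Set.Icc (0:ℝ) 1)), x ∈ Set.Icc (0:ℝ) 1 :=
    ae_restrict_mem measurableSet_Icc
  have hne : ∀ᵐ x ∂(volume.restrict (Set.Icc (0:ℝ) 1)), x ≠ 0 := by
    rw [ae_iff]
    have e : {x : ℝ | ¬ x ≠ 0} = {0} := by ext y; simp
    rw [e, Measure.restrict_apply (measurableSet_singleton 0)]
    exact measure_mono_null Set.inter_subset_left (by simp)
  filter_upwards [hae', hmem, hne] with x hx hIcc hx0
  have hxI : x ∈ Set.Ioc (0:ℝ) 1 := ⟨lt_of_le_of_ne hIcc.1 (Ne.symm hx0), hIcc.2⟩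
  -- eventual digit bounds
  have hdig : ∀ j : ℕ, ∀ᶠ k : ℕ in atTop,
      Real.exp ((1 - 1/((j:ℝ)+2))*((k:ℝ)+1)) < ((⌊1/(pierceT^[k] x)⌋₊ : ℕ) : ℝ) ∧
      ((⌊1/(pierceT^[k] x)⌋₊ : ℕ) : ℝ) < Real.exp ((1 + 1/((j:ℝ)+2))*((k:ℝ)+1)) ∧
      pierceT^[k] x ≠ 0 := by
    intro j
    obtain ⟨h1, h2⟩ := hx j
    filter_upwards [h1, h2] with k hk1 hk2
    have hd1 : ¬ (pierceD1 (pierceT^[k] x) ≤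
        ((⌊Real.exp ((1 - 1/((j:ℝ)+2))*((k:ℝ)+1))⌋₊ : ℕ) : ℕ∞)) := fun h => hk1 ⟨hxI, h⟩
    have hd2 : ¬ (((⌈Real.exp ((1 + 1/((j:ℝ)+2))*((k:ℝ)+1))⌉₊ : ℕ) : ℕ∞) ≤
        pierceD1 (pierceT^[k] x)) := fun h => hk2 ⟨hxI, h⟩
    have hlt1 := lt_of_not_ge hd1
    have hlt2 := lt_of_not_ge hd2
    have hy : pierceT^[k] x ≠ 0 := by
      intro h
      rw [h] at hlt2
      simp [pierceD1] at hlt2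
    rw [pierceD1_ne_zero hy] at hlt1 hlt2
    have hn1 : ⌊Real.exp ((1 - 1/((j:ℝ)+2))*((k:ℝ)+1))⌋₊ < ⌊1/(pierceT^[k] x)⌋₊ := by
      exact_mod_cast hlt1
    have hn2 : ⌊1/(pierceT^[k] x)⌋₊ < ⌈Real.exp ((1 + 1/((j:ℝ)+2))*((k:ℝ)+1))⌉₊ := by
      exact_mod_cast hlt2
    refine ⟨(Nat.floor_lt (Real.exp_pos _).le).1 hn1, Nat.lt_ceil.1 hn2, hy⟩
  -- real convergence
  have hu : Tendsto (fun n : ℕ =>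
      Real.log ((⌊1/(pierceT^[n-1] x)⌋₊ : ℕ) : ℝ) / (n:ℝ)) atTop (𝓝 1) := by
    rw [Metric.tendsto_atTop]
    intro δ hδ
    obtain ⟨j, hj⟩ : ∃ j : ℕ, 1/((j:ℝ)+2) < δ := by
      obtain ⟨j, hj⟩ := exists_nat_one_div_lt hδ
      refine ⟨j, lt_of_le_of_lt ?_ hj⟩
      apply div_le_div_of_nonneg_left (by norm_num) (by positivity)
      have : (0:ℝ) ≤ (j:ℝ) := Nat.cast_nonneg j
      linarith
    obtain ⟨N, hN⟩ := eventually_atTop.mp (hdig j)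
    refine ⟨N+1, fun n hn => ?_⟩
    obtain ⟨hl, hh, hy⟩ := hN (n-1) (by omega)
    set m : ℕ := ⌊1/(pierceT^[n-1] x)⌋₊ with hm
    have hcast : (((n:ℕ) - 1 : ℕ):ℝ) + 1 = (n:ℝ) := by
      have h1 : ((n-1:ℕ)+1 : ℕ) = n := by omega
      exact_mod_cast congrArg (Nat.cast : ℕ → ℝ) h1
    rw [hcast] at hl hh
    have hn0 : (0:ℝ) < (n:ℝ) := by
      have : 0 < n := by omega
      exact_mod_cast this
    have hm1 : (1:ℝ) ≤ (m:ℝ) := by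
      have h0 : (0:ℝ) < (m:ℝ) := lt_trans (Real.exp_pos _) hl
      have : 0 < m := by exact_mod_cast h0
      exact_mod_cast this
    have hlog1 : (1 - 1/((j:ℝ)+2))*(n:ℝ) < Real.log m :=
      (Real.lt_log_iff_exp_lt (by linarith)).2 hl
    have hlog2 : Real.log m < (1 + 1/((j:ℝ)+2))*(n:ℝ) :=
      (Real.log_lt_iff_lt_exp (by linarith)).2 hh
    rw [Real.dist_eq, abs_lt]
    have hd1 : (1 - 1/((j:ℝ)+2)) < Real.log m / (n:ℝ) := by
      rw [lt_div_iff₀ hn0]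
      exact hlog1
    have hd2 : Real.log m / (n:ℝ) < (1 + 1/((j:ℝ)+2)) := by
      rw [div_lt_iff₀ hn0]
      exact hlog2
    constructor <;> [linarith; linarith]
  -- eventual equality and transfer to ℝ≥0∞
  obtain ⟨N0, hN0⟩ := eventually_atTop.mp (hdig 0)
  have heq : (fun n : ℕ => ENNReal.ofReal
      (Real.log ((⌊1/(pierceT^[n-1] x)⌋₊ : ℕ) : ℝ) / (n:ℝ))) =ᶠ[atTop]
      (fun n : ℕ => enlog (pierceDigit n x) / (n : ℝ≥0∞)) := by
    refine eventually_atTop.2 ⟨N0+1, fun n hn => ?_⟩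
    obtain ⟨-, -, hy⟩ := hN0 (n-1) (by omega)
    have hn0 : (0:ℝ) < (n:ℝ) := by
      have : 0 < n := by omega
      exact_mod_cast this
    have hD : pierceDigit n x = ((⌊1/(pierceT^[n-1] x)⌋₊ : ℕ) : ℕ∞) := by
      rw [pierceDigit]
      exact pierceD1_ne_zero hy
    show ENNReal.ofReal (Real.log ((⌊1/(pierceT^[n-1] x)⌋₊ : ℕ) : ℝ) / (n:ℝ))
        = enlog (pierceDigit n x) / (n : ℝ≥0∞)
    have he : enlog ((⌊1/(pierceT^[n-1] x)⌋₊ : ℕ) : ℕ∞)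
        = ENNReal.ofReal (Real.log ((⌊1/(pierceT^[n-1] x)⌋₊ : ℕ) : ℝ)) := by
      rw [enlog, if_neg (by simp)]
      norm_cast
    rw [hD, he, ENNReal.ofReal_div_of_pos hn0, ENNReal.ofReal_natCast]
  have hof : Tendsto (fun n : ℕ => ENNReal.ofReal
      (Real.log ((⌊1/(pierceT^[n-1] x)⌋₊ : ℕ) : ℝ) / (n:ℝ))) atTop (𝓝 (1:ℝ≥0∞)) := by
    have := ENNReal.tendsto_ofReal hu
    rwa [ENNReal.ofReal_one] at this
  exact hof.congr' heq
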